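/- With J : M̃ → 𝔤* the momentum map on the universal cover defined by path integrals ⟨J(x̃),ξ⟩ = ∫₀¹ ω(ξ_M(x(t)), ẋ(t)) dt, one has J(x̃ * ỹ) = J(x̃) + J(ỹ) for every x̃ ∈ π₁(M,z₀) and ỹ ∈ M̃, where * is concatenation of path classes. -/

import Mathlib

open MeasureTheory intervalIntegral Set

/-- additivity of the momentum map `J` on the universal cover under
concatenation with loops: with `α = ι_{ξ_M}ω` the 1-form `v ↦ ω(ξ_M, v)` and with
`x` a loop at `z₀` and `y` a path starting at `z₀`, the integral of `α` along the
concatenation `x * y` equals the sum of the integrals along `x` and along `y`;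
i.e. `J(x̃ * ỹ) = J(x̃) + J(ỹ)`. -/
theorem stmt11 {E : Type*} [NormedAddCommGroup E] [NormedSpace ℝ E]
    (ω : E → E →L[ℝ] E →L[ℝ] ℝ) (X : E → E)
    (hωcont : Continuous ω) (hXcont : Continuous X)
    (hskew : ∀ x u v, ω x u v = - (ω x v u))
    (α : E → E →L[ℝ] ℝ) (hα : ∀ x, α x = ω x (X x))
    (z₀ : E) (x y : ℝ → E)
    (hx : ContDiff ℝ 1 x) (hy : ContDiff ℝ 1 y)
    (hx0 : x 0 = z₀) (hx1 : x 1 = z₀) (hy0 : y 0 = z₀) :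
    (∫ t in (0:ℝ)..1,
        α ((fun t => if t ≤ 1/2 then x (2*t) else y (2*t - 1)) t)
          (deriv (fun t => if t ≤ 1/2 then x (2*t) else y (2*t - 1)) t))
      = (∫ t in (0:ℝ)..1, α (x t) (deriv x t))
        + ∫ t in (0:ℝ)..1, α (y t) (deriv y t) := by
  set c : ℝ → E := fun t => if t ≤ 1/2 then x (2*t) else y (2*t - 1) with hc
  have hαcont : Continuous fun p : E × E => α p.1 p.2 := by
    have : (fun p : E × E => α p.1 p.2) = fun p : E × E => ω p.1 (X p.1) p.2 := by
      funext p; rw [hα]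
    rw [this]
    exact ((hωcont.comp continuous_fst).clm_apply
      (hXcont.comp continuous_fst)).clm_apply continuous_snd
  have hg1 : Continuous fun t => α (x t) (deriv x t) :=
    hαcont.comp (hx.continuous.prodMk (hx.continuous_deriv le_rfl))
  have hg2 : Continuous fun t => α (y t) (deriv y t) :=
    hαcont.comp (hy.continuous.prodMk (hy.continuous_deriv le_rfl))
  -- derivative of c for t < 1/2
  have hd1 : ∀ t : ℝ, t < 1/2 → deriv c t = (2:ℝ) • deriv x (2*t) := by
    intro t ht
    have heq : c =ᶠ[nhds t] fun s => x (2*s) := by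
      filter_upwards [Iio_mem_nhds ht] with s hs
      simp only [hc]; rw [if_pos (le_of_lt hs)]
    have hder : HasDerivAt (fun s => x (2*s)) ((2:ℝ) • deriv x (2*t)) t := by
      have h1 : HasDerivAt x (deriv x (2*t)) (2*t) :=
        ((hx.differentiable one_ne_zero) (2*t)).hasDerivAt
      have h2 : HasDerivAt (fun s : ℝ => 2*s) 2 t := by
        simpa using (hasDerivAt_id t).const_mul (2:ℝ)
      exact h1.scomp t h2
    rw [heq.deriv_eq]
    exact hder.deriv
  have hd2 : ∀ t : ℝ, 1/2 < t → deriv c t = (2:ℝ) • deriv y (2*t - 1) := by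
    intro t ht
    have heq : c =ᶠ[nhds t] fun s => y (2*s - 1) := by
      filter_upwards [Ioi_mem_nhds ht] with s hs
      simp only [hc]; rw [if_neg (not_le.mpr hs)]
    have hder : HasDerivAt (fun s => y (2*s - 1)) ((2:ℝ) • deriv y (2*t - 1)) t := by
      have h1 : HasDerivAt y (deriv y (2*t - 1)) (2*t - 1) :=
        ((hy.differentiable one_ne_zero) (2*t - 1)).hasDerivAt
      have h2 : HasDerivAt (fun s : ℝ => 2*s - 1) 2 t := by
        simpa using ((hasDerivAt_id t).const_mul (2:ℝ)).sub_const 1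
      exact h1.scomp t h2
    rw [heq.deriv_eq]
    exact hder.deriv
  -- the integrand a.e. on each half
  have hae1 : (fun t => α (c t) (deriv c t))
      =ᵐ[volume.restrict (Set.uIoc (0:ℝ) (1/2))] fun t => (2:ℝ) • α (x (2*t)) (deriv x (2*t)) := by
    have hne : ∀ᵐ t : ℝ ∂volume.restrict (Set.uIoc (0:ℝ) (1/2)), t ≠ 1/2 :=
      ae_restrict_of_ae (by
        refine (MeasureTheory.measure_mono_null (fun s hs => ?_) (measure_singleton (1/2 : ℝ)))
        simpa using hs)
    filter_upwards [hne, ae_restrict_mem measurableSet_uIoc] with t ht hmem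
    rw [Set.uIoc_of_le (by norm_num : (0:ℝ) ≤ 1/2)] at hmem
    have ht2 : t < 1/2 := lt_of_le_of_ne hmem.2 ht
    have hct : c t = x (2*t) := by simp only [hc]; rw [if_pos (le_of_lt ht2)]
    rw [hct, hd1 t ht2, (α (x (2*t))).map_smul]
  have hae2 : (fun t => α (c t) (deriv c t))
      =ᵐ[volume.restrict (Set.uIoc (1/2:ℝ) 1)] fun t => (2:ℝ) • α (y (2*t - 1)) (deriv y (2*t - 1)) := by
    filter_upwards [ae_restrict_mem measurableSet_uIoc] with t hmem
    rw [Set.uIoc_of_le (by norm_num : (1/2:ℝ) ≤ 1)] at hmem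
    have ht2 : 1/2 < t := hmem.1
    have hct : c t = y (2*t - 1) := by simp only [hc]; rw [if_neg (not_le.mpr ht2)]
    rw [hct, hd2 t ht2, (α (y (2*t - 1))).map_smul]
  have hcont1 : Continuous fun t => (2:ℝ) • α (x (2*t)) (deriv x (2*t)) :=
    (hg1.comp (continuous_const.mul continuous_id : Continuous fun t : ℝ => 2*t)).const_smul (2:ℝ)
  have hcont2 : Continuous fun t => (2:ℝ) • α (y (2*t - 1)) (deriv y (2*t - 1)) :=
    (hg2.comp ((continuous_const.mul continuous_id).sub continuous_const : Continuous fun t : ℝ => 2*t - 1)).const_smul (2:ℝ)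
  have hint1 : IntervalIntegrable (fun t => α (c t) (deriv c t)) volume 0 (1/2) :=
    (hcont1.intervalIntegrable _ _).congr_ae hae1.symm
  have hint2 : IntervalIntegrable (fun t => α (c t) (deriv c t)) volume (1/2) 1 :=
    (hcont2.intervalIntegrable _ _).congr_ae hae2.symm
  have hsplit := integral_add_adjacent_intervals hint1 hint2
  rw [← hsplit, integral_congr_ae (ae_imp_of_ae_restrict hae1),
    integral_congr_ae (ae_imp_of_ae_restrict hae2)]
  congr 1
  · have := integral_comp_smul_deriv (a := (0:ℝ)) (b := 1/2) (f := fun s => 2*s)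
      (f' := fun _ => (2:ℝ)) (g := fun t => α (x t) (deriv x t))
      (fun s _ => by simpa using (hasDerivAt_id s).const_mul (2:ℝ))
      continuousOn_const hg1
    norm_num [Function.comp] at this
    simpa using this
  · have := integral_comp_smul_deriv (a := (1/2:ℝ)) (b := 1) (f := fun s => 2*s - 1)
      (f' := fun _ => (2:ℝ)) (g := fun t => α (y t) (deriv y t))
      (fun s _ => by simpa using ((hasDerivAt_id s).const_mul (2:ℝ)).sub_const 1)
      continuousOn_const hg2
    norm_num [Function.comp] at this
    simpa using this
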